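/- For 0 \le i \le j \le d, rank(E^*_i A^{j-i} E^*_j) = rank(E^*_j A^{j-i} E^*_i) = min(\rho_i, \rho_j), where \rho_k = dim E^*_kV; this minimum equals \rho_i if i+j \le d and \rho_j if i+j \ge d. -/

import Mathlib

/-- A tridiagonal system `(A; {E_i}; A*; {E*_i})` of diameter `d` on `V`:
`A, A*` are diagonalizable with primitive idempotents `E_i`, `E*_i` (in standard
orderings, so that the tridiagonal conditions hold), mutually distinct eigenvalues
`θ_i`, `θ*_i`, and no nontrivial proper subspace of `V` is invariant under both. -/
structure TDSystem (F V : Type*) [Field F] [AddCommGroup V] [Module F V] (d : ℕ) where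
  A : Module.End F V
  As : Module.End F V
  E : ℕ → Module.End F V
  Es : ℕ → Module.End F V
  θ : ℕ → F
  θs : ℕ → F
  hEE : ∀ i ≤ d, ∀ j ≤ d, E i * E j = if i = j then E i else 0
  hEsEs : ∀ i ≤ d, ∀ j ≤ d, Es i * Es j = if i = j then Es i else 0
  hEsum : ∑ i ∈ Finset.range (d + 1), E i = 1
  hEssum : ∑ i ∈ Finset.range (d + 1), Es i = 1
  hEne : ∀ i ≤ d, E i ≠ 0
  hEsne : ∀ i ≤ d, Es i ≠ 0
  hA : A = ∑ i ∈ Finset.range (d + 1), θ i • E i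
  hAs : As = ∑ i ∈ Finset.range (d + 1), θs i • Es i
  hθ : ∀ i ≤ d, ∀ j ≤ d, i ≠ j → θ i ≠ θ j
  hθs : ∀ i ≤ d, ∀ j ≤ d, i ≠ j → θs i ≠ θs j
  htri : ∀ i ≤ d, ∀ j ≤ d, (i + 1 < j ∨ j + 1 < i) → Es i * A * Es j = 0
  htris : ∀ i ≤ d, ∀ j ≤ d, (i + 1 < j ∨ j + 1 < i) → E i * As * E j = 0
  hirr : ∀ W : Submodule F V, (∀ v ∈ W, A v ∈ W) → (∀ v ∈ W, As v ∈ W) → W = ⊥ ∨ W = ⊤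

namespace TD

variable {F V : Type*} [Field F] [AddCommGroup V] [Module F V] {d : ℕ}

open Module LinearMap Finset

/- ============ generic families ============ -/

noncomputable def rsup (f : ℕ → Module.End F V) (s : Finset ℕ) : Submodule F V :=
  s.sup fun h => LinearMap.range (f h)

lemma range_le_rsup {f : ℕ → Module.End F V} {s : Finset ℕ} {h : ℕ} (hh : h ∈ s) :
    LinearMap.range (f h) ≤ rsup f s :=
  Finset.le_sup (f := fun h => LinearMap.range (f h)) hh

lemma mem_rsup_of {f : ℕ → Module.End F V} {s : Finset ℕ} {h : ℕ} (hh : h ∈ s) (v : V) :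
    f h v ∈ rsup f s := range_le_rsup hh ⟨v, rfl⟩

lemma rsup_le_iff {f : ℕ → Module.End F V} {s : Finset ℕ} {K : Submodule F V} :
    rsup f s ≤ K ↔ ∀ h ∈ s, LinearMap.range (f h) ≤ K := Finset.sup_le_iff

lemma rsup_mono {f : ℕ → Module.End F V} {s t : Finset ℕ} (hst : s ⊆ t) :
    rsup f s ≤ rsup f t := Finset.sup_mono hst

lemma rsup_apply_mem {f : ℕ → Module.End F V} {s : Finset ℕ} {K : Submodule F V}
    (g : Module.End F V) (H : ∀ h ∈ s, ∀ w : V, g (f h w) ∈ K) :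
    ∀ v ∈ rsup f s, g v ∈ K := by
  have : rsup f s ≤ Submodule.comap g K := by
    rw [rsup_le_iff]
    rintro h hh _ ⟨w, rfl⟩
    exact H h hh w
  exact fun v hv => this hv

lemma finsup_apply_mem {U : ℕ → Submodule F V} {s : Finset ℕ} {K : Submodule F V}
    (g : Module.End F V) (H : ∀ h ∈ s, ∀ w ∈ U h, g w ∈ K) :
    ∀ v ∈ s.sup U, g v ∈ K := by
  have : s.sup U ≤ Submodule.comap g K := by
    rw [Finset.sup_le_iff]
    exact fun h hh w hw => H h hh w hw
  exact fun v hv => this hv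

variable {f : ℕ → Module.End F V}

section Family
variable (horth : ∀ i ≤ d, ∀ j ≤ d, f i * f j = if i = j then f i else 0)
  (hsum : ∑ i ∈ Finset.range (d + 1), f i = 1)

include hsum in
lemma sum_apply_eq (v : V) : ∑ h ∈ Finset.range (d + 1), f h v = v := by
  have := congrArg (fun (g : Module.End F V) => g v) hsum
  simpa [LinearMap.sum_apply] using this

include horth in
lemma kill {s : Finset ℕ} {a : ℕ} (ha : a ≤ d) (hans : a ∉ s)
    (hs : s ⊆ Finset.range (d + 1)) {v : V} (hv : v ∈ rsup f s) : f a v = 0 := by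
  have : rsup f s ≤ LinearMap.ker (f a) := by
    refine Finset.sup_le fun h hh => ?_
    rintro _ ⟨w, rfl⟩
    have hhd : h ≤ d := Nat.lt_succ_iff.mp (Finset.mem_range.mp (hs hh))
    have hne : a ≠ h := fun e => hans (e ▸ hh)
    have h0 := horth a ha h hhd
    rw [if_neg hne] at h0
    have : f a (f h w) = (f a * f h) w := rfl
    rw [LinearMap.mem_ker, this, h0]
    rfl
  exact this hv

include horth hsum in
lemma decomp {s : Finset ℕ} (hs : s ⊆ Finset.range (d + 1)) {v : V} (hv : v ∈ rsup f s) :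
    v = ∑ h ∈ s, f h v := by
  have h1 : ∑ h ∈ s, f h v = ∑ h ∈ Finset.range (d + 1), f h v := by
    refine Finset.sum_subset hs fun x hx hxs => ?_
    exact kill horth (Nat.lt_succ_iff.mp (Finset.mem_range.mp hx)) hxs hs hv
  rw [h1, sum_apply_eq hsum]

include hsum in
lemma rsup_univ_top : rsup f (Finset.range (d + 1)) = ⊤ := by
  rw [eq_top_iff]
  intro v _
  have hv : v = ∑ h ∈ Finset.range (d + 1), f h v := (sum_apply_eq hsum v).symm
  rw [hv]
  exact Submodule.sum_mem _ fun h hh => mem_rsup_of hh v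

include horth in
lemma finrank_rsup [FiniteDimensional F V] {s : Finset ℕ} (hs : s ⊆ Finset.range (d + 1)) :
    Module.finrank F (rsup f s) = ∑ h ∈ s, Module.finrank F (LinearMap.range (f h)) := by
  classical
  induction s using Finset.induction_on with
  | empty => simp [rsup]; exact finrank_bot F V
  | @insert a s hans ih =>
    have hs' : s ⊆ Finset.range (d + 1) := fun x hx => hs (Finset.mem_insert_of_mem hx)
    have had : a ≤ d := Nat.lt_succ_iff.mp (Finset.mem_range.mp (hs (Finset.mem_insert_self a s)))
    have hr : rsup f (insert a s) = LinearMap.range (f a) ⊔ rsup f s := by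
      simp [rsup, Finset.sup_insert]
    have hdisj : LinearMap.range (f a) ⊓ rsup f s = ⊥ := by
      rw [eq_bot_iff]
      rintro x ⟨⟨y, rfl⟩, hx2⟩
      have h1 : f a (f a y) = f a y := by
        have h0 := horth a had a had
        rw [if_pos rfl] at h0
        calc f a (f a y) = (f a * f a) y := rfl
        _ = f a y := by rw [h0]
      have h2 : f a (f a y) = 0 := kill horth had hans hs' hx2
      have : f a y = (0 : V) := by rw [← h1, h2]
      simp [this]
    have := Submodule.finrank_sup_add_finrank_inf_eq (LinearMap.range (f a)) (rsup f s)
    rw [hdisj] at this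
    rw [finrank_bot F V] at this
    rw [add_zero] at this
    rw [hr, this, ih hs', Finset.sum_insert hans]

variable {A : Module.End F V} {θ : ℕ → F}
  (hA : A = ∑ i ∈ Finset.range (d + 1), θ i • f i)

include hA horth in
lemma diag_right {k : ℕ} (hk : k ≤ d) : A * f k = θ k • f k := by
  rw [hA, Finset.sum_mul]
  rw [Finset.sum_eq_single k]
  · rw [smul_mul_assoc, horth k hk k hk, if_pos rfl]
  · intro b hb hbk
    rw [smul_mul_assoc, horth b (Nat.lt_succ_iff.mp (Finset.mem_range.mp hb)) k hk,
      if_neg hbk, smul_zero]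
  · intro hk'
    exact absurd (Finset.mem_range.mpr (Nat.lt_succ_of_le hk)) hk'

include hA horth in
lemma diag_left {k : ℕ} (hk : k ≤ d) : f k * A = θ k • f k := by
  rw [hA, Finset.mul_sum]
  rw [Finset.sum_eq_single k]
  · rw [mul_smul_comm, horth k hk k hk, if_pos rfl]
  · intro b hb hbk
    rw [mul_smul_comm, horth k hk b (Nat.lt_succ_iff.mp (Finset.mem_range.mp hb)),
      if_neg (fun e => hbk e.symm), smul_zero]
  · intro hk'
    exact absurd (Finset.mem_range.mpr (Nat.lt_succ_of_le hk)) hk'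

end Family

end TD
namespace TD
variable {F V : Type*} [Field F] [AddCommGroup V] [Module F V] {d : ℕ}
open Module LinearMap Finset

/- ============ system transforms ============ -/

/-- Swap the roles of `A` and `A*`. -/
def _root_.TDSystem.swap (Φ : TDSystem F V d) : TDSystem F V d where
  A := Φ.As
  As := Φ.A
  E := Φ.Es
  Es := Φ.E
  θ := Φ.θs
  θs := Φ.θ
  hEE := Φ.hEsEs
  hEsEs := Φ.hEE
  hEsum := Φ.hEssum
  hEssum := Φ.hEsum
  hEne := Φ.hEsne
  hEsne := Φ.hEne
  hA := Φ.hAs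
  hAs := Φ.hA
  hθ := Φ.hθs
  hθs := Φ.hθ
  htri := Φ.htris
  htris := Φ.htri
  hirr := fun W h1 h2 => Φ.hirr W h2 h1

/-- Reverse the ordering of the `E*` idempotents. -/
def _root_.TDSystem.revEs (Φ : TDSystem F V d) : TDSystem F V d where
  A := Φ.A
  As := Φ.As
  E := Φ.E
  Es := fun i => Φ.Es (d - i)
  θ := Φ.θ
  θs := fun i => Φ.θs (d - i)
  hEE := Φ.hEE
  hEsEs := by
    intro i hi j hj
    have h := Φ.hEsEs (d - i) (by omega) (d - j) (by omega)
    rw [h]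
    by_cases hij : i = j
    · rw [if_pos hij, if_pos (by omega)]
    · rw [if_neg hij, if_neg (by omega)]
  hEsum := Φ.hEsum
  hEssum := by
    rw [← Φ.hEssum]
    have := Finset.sum_range_reflect (fun j => Φ.Es j) (d + 1)
    simpa using this
  hEne := Φ.hEne
  hEsne := fun i hi => Φ.hEsne (d - i) (by omega)
  hA := Φ.hA
  hAs := by
    rw [Φ.hAs]
    have := Finset.sum_range_reflect (fun j => Φ.θs j • Φ.Es j) (d + 1)
    simpa using this.symm
  hθ := Φ.hθ
  hθs := fun i hi j hj hne => Φ.hθs (d - i) (by omega) (d - j) (by omega) (by omega)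
  htri := fun i hi j hj hc => Φ.htri (d - i) (by omega) (d - j) (by omega) (by omega)
  htris := Φ.htris
  hirr := Φ.hirr

/-- Reverse the ordering of the `E` idempotents. -/
def _root_.TDSystem.revE (Φ : TDSystem F V d) : TDSystem F V d := Φ.swap.revEs.swap

lemma revE_E (Φ : TDSystem F V d) : Φ.revE.E = fun i => Φ.E (d - i) := rfl
lemma revE_Es (Φ : TDSystem F V d) : Φ.revE.Es = Φ.Es := rfl
lemma revE_A (Φ : TDSystem F V d) : Φ.revE.A = Φ.A := rfl

/- ============ the filtration submodules ============ -/

variable (Φ : TDSystem F V d)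

/-- `E*_0 V + ⋯ + E*_{k-1} V` (capped at `d`). -/
noncomputable def Eslt (k : ℕ) : Submodule F V :=
  rsup Φ.Es (Finset.range (min k (d + 1)))

/-- `E_k V + ⋯ + E_d V`. -/
noncomputable def Ege (k : ℕ) : Submodule F V :=
  rsup Φ.E (Finset.Icc k d)

/-- The split decomposition subspace `U_i`. -/
noncomputable def U (i : ℕ) : Submodule F V := Eslt Φ (i + 1) ⊓ Ege Φ i

lemma Eslt_mono {k l : ℕ} (h : k ≤ l) : Eslt Φ k ≤ Eslt Φ l :=
  rsup_mono (Finset.range_subset_range.mpr (by omega))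

lemma Eslt_top {k : ℕ} (h : d + 1 ≤ k) : Eslt Φ k = ⊤ := by
  rw [Eslt, min_eq_right h]
  exact rsup_univ_top Φ.hEssum

lemma Ege_bot {k : ℕ} (h : d < k) : Ege Φ k = ⊥ := by
  rw [Ege, Finset.Icc_eq_empty (by omega)]
  rfl

lemma Ege_anti {k l : ℕ} (h : k ≤ l) : Ege Φ l ≤ Ege Φ k :=
  rsup_mono (Finset.Icc_subset_Icc_left h)

lemma Ege_zero : Ege Φ 0 = ⊤ := by
  rw [Ege, show Finset.Icc 0 d = Finset.range (d + 1) by ext x; simp]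
  exact rsup_univ_top Φ.hEsum

lemma mem_Eslt_decomp {k : ℕ} {v : V} (hv : v ∈ Eslt Φ k) :
    v = ∑ h ∈ Finset.range (min k (d + 1)), Φ.Es h v :=
  decomp Φ.hEsEs Φ.hEssum (Finset.range_subset_range.mpr (by omega)) hv

lemma mem_Ege_decomp {k : ℕ} {v : V} (hv : v ∈ Ege Φ k) :
    v = ∑ h ∈ Finset.Icc k d, Φ.E h v :=
  decomp Φ.hEE Φ.hEsum (fun x hx => Finset.mem_range.mpr
    (by have := Finset.mem_Icc.mp hx; omega)) hv

lemma Es_kill_Eslt {k j : ℕ} (hkj : k ≤ j) (hj : j ≤ d) {v : V} (hv : v ∈ Eslt Φ k) :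
    Φ.Es j v = 0 :=
  kill Φ.hEsEs hj (by simp; omega) (Finset.range_subset_range.mpr (by omega)) hv

lemma Eslt_drop {j : ℕ} {v : V} (hv : v ∈ Eslt Φ (j + 1)) (h0 : Φ.Es j v = 0) :
    v ∈ Eslt Φ j := by
  by_cases hj : j ≤ d
  · have hd := mem_Eslt_decomp Φ hv
    rw [min_eq_left (by omega)] at hd
    rw [hd]
    refine Submodule.sum_mem _ fun h hh => ?_
    rcases Finset.mem_range.mp hh with hlt
    by_cases hhj : h = j
    · rw [hhj, h0]; exact Submodule.zero_mem _
    · exact range_le_rsup (Finset.mem_range.mpr (by omega)) ⟨v, rfl⟩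
  · rw [Eslt, min_eq_right (by omega)]
    rw [Eslt, min_eq_right (by omega)] at hv
    exact hv

end TD
namespace TD
variable {F V : Type*} [Field F] [AddCommGroup V] [Module F V] {d : ℕ}
open Module LinearMap Finset
variable (Φ : TDSystem F V d)

/- ============ movement lemmas ============ -/

lemma A_Eslt {k : ℕ} {v : V} (hv : v ∈ Eslt Φ k) : Φ.A v ∈ Eslt Φ (k + 1) := by
  refine rsup_apply_mem Φ.A ?_ v hv
  intro h hh w
  have hhd : h ≤ d := by have := Finset.mem_range.mp hh; omega
  have hhk : h < k := by have := Finset.mem_range.mp hh; omega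
  have hsum : Φ.A (Φ.Es h w) = ∑ m ∈ Finset.range (d + 1), Φ.Es m (Φ.A (Φ.Es h w)) :=
    (sum_apply_eq Φ.hEssum _).symm
  rw [hsum]
  refine Submodule.sum_mem _ fun m hm => ?_
  have hmd : m ≤ d := Nat.lt_succ_iff.mp (Finset.mem_range.mp hm)
  by_cases hmh : m ≤ h + 1
  · exact range_le_rsup (Finset.mem_range.mpr (by omega)) ⟨_, rfl⟩
  · have h0 := Φ.htri m hmd h hhd (Or.inr (by omega))
    have : Φ.Es m (Φ.A (Φ.Es h w)) = (Φ.Es m * Φ.A * Φ.Es h) w := rfl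
    rw [this, h0]
    exact Submodule.zero_mem _

lemma Apow_Eslt {m k : ℕ} {v : V} (hv : v ∈ Eslt Φ k) : (Φ.A ^ m) v ∈ Eslt Φ (k + m) := by
  induction m with
  | zero => simpa using hv
  | succ n ih =>
    have : Φ.A ^ (n + 1) = Φ.A * Φ.A ^ n := by rw [pow_succ']
    rw [this]
    have := A_Eslt Φ ih
    rw [show k + n + 1 = k + (n + 1) by omega] at this
    exact this

lemma As_Eslt_sub {i : ℕ} {v : V} (hv : v ∈ Eslt Φ (i + 1)) :
    Φ.As v - Φ.θs i • v ∈ Eslt Φ i := by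
  refine rsup_apply_mem (Φ.As - Φ.θs i • (1 : Module.End F V)) ?_ v hv
  intro h hh w
  have hhd : h ≤ d := by have := Finset.mem_range.mp hh; omega
  have hhi : h ≤ i := by have := Finset.mem_range.mp hh; omega
  have hAsE : Φ.As (Φ.Es h w) = Φ.θs h • Φ.Es h w := by
    have := diag_right Φ.hEsEs Φ.hAs hhd
    calc Φ.As (Φ.Es h w) = (Φ.As * Φ.Es h) w := rfl
    _ = Φ.θs h • Φ.Es h w := by rw [this]; rfl
  have : (Φ.As - Φ.θs i • (1 : Module.End F V)) (Φ.Es h w)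
      = (Φ.θs h - Φ.θs i) • Φ.Es h w := by
    simp [hAsE, sub_smul]
  rw [this]
  by_cases hhieq : h = i
  · rw [hhieq, sub_self, zero_smul]; exact Submodule.zero_mem _
  · exact Submodule.smul_mem _ _ (range_le_rsup (Finset.mem_range.mpr (by omega)) ⟨w, rfl⟩)

lemma A_Ege_sub {i : ℕ} (hi : i ≤ d) {v : V} (hv : v ∈ Ege Φ i) :
    Φ.A v - Φ.θ i • v ∈ Ege Φ (i + 1) := by
  refine rsup_apply_mem (Φ.A - Φ.θ i • (1 : Module.End F V)) ?_ v hv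
  intro h hh w
  obtain ⟨hih, hhd⟩ := Finset.mem_Icc.mp hh
  have hAE : Φ.A (Φ.E h w) = Φ.θ h • Φ.E h w := by
    have := diag_right Φ.hEE Φ.hA hhd
    calc Φ.A (Φ.E h w) = (Φ.A * Φ.E h) w := rfl
    _ = Φ.θ h • Φ.E h w := by rw [this]; rfl
  have : (Φ.A - Φ.θ i • (1 : Module.End F V)) (Φ.E h w)
      = (Φ.θ h - Φ.θ i) • Φ.E h w := by
    simp [hAE, sub_smul]
  rw [this]
  by_cases hhieq : h = i
  · rw [hhieq, sub_self, zero_smul]; exact Submodule.zero_mem _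
  · exact Submodule.smul_mem _ _ (range_le_rsup (Finset.mem_Icc.mpr ⟨by omega, hhd⟩) ⟨w, rfl⟩)

lemma As_Ege {i : ℕ} {v : V} (hv : v ∈ Ege Φ i) : Φ.As v ∈ Ege Φ (i - 1) := by
  refine rsup_apply_mem Φ.As ?_ v hv
  intro h hh w
  obtain ⟨hih, hhd⟩ := Finset.mem_Icc.mp hh
  have hsum : Φ.As (Φ.E h w) = ∑ m ∈ Finset.range (d + 1), Φ.E m (Φ.As (Φ.E h w)) :=
    (sum_apply_eq Φ.hEsum _).symm
  rw [hsum]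
  refine Submodule.sum_mem _ fun m hm => ?_
  have hmd : m ≤ d := Nat.lt_succ_iff.mp (Finset.mem_range.mp hm)
  by_cases hmh : m + 1 ≥ h
  · exact range_le_rsup (Finset.mem_Icc.mpr ⟨by omega, hmd⟩) ⟨_, rfl⟩
  · have h0 := Φ.htris m hmd h hhd (Or.inl (by omega))
    have : Φ.E m (Φ.As (Φ.E h w)) = (Φ.E m * Φ.As * Φ.E h) w := rfl
    rw [this, h0]
    exact Submodule.zero_mem _

/- ============ U invariance and the key sup-top theorem ============ -/

lemma U_A {i : ℕ} (hi : i ≤ d) {v : V} (hv : v ∈ U Φ i) :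
    Φ.A v - Φ.θ i • v ∈ U Φ (i + 1) := by
  obtain ⟨h1, h2⟩ := hv
  constructor
  · have hA1 : Φ.A v ∈ Eslt Φ (i + 2) := A_Eslt Φ h1
    have hA2 : Φ.θ i • v ∈ Eslt Φ (i + 2) :=
      Submodule.smul_mem _ _ (Eslt_mono Φ (by omega) h1)
    exact Submodule.sub_mem _ hA1 hA2
  · exact A_Ege_sub Φ hi h2

lemma U_As {i : ℕ} (hi : i ≤ d) {v : V} (hv : v ∈ U Φ i) :
    Φ.As v - Φ.θs i • v ∈ U Φ (i - 1) := by
  obtain ⟨h1, h2⟩ := hv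
  constructor
  · have := As_Eslt_sub Φ h1
    exact Eslt_mono Φ (by omega) this
  · have hA1 : Φ.As v ∈ Ege Φ (i - 1) := As_Ege Φ h2
    have hA2 : Φ.θs i • v ∈ Ege Φ (i - 1) :=
      Submodule.smul_mem _ _ (Ege_anti Φ (by omega) h2)
    exact Submodule.sub_mem _ hA1 hA2

/-- The crucial consequence of irreducibility. -/
lemma sup_top (i : ℕ) : Eslt Φ (i + 1) ⊔ Ege Φ (i + 1) = ⊤ := by
  set W : Submodule F V := (Finset.range (d + 1)).sup (U Φ) with hW
  have hUle : ∀ h ≤ d, U Φ h ≤ W := fun h hh =>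
    Finset.le_sup (Finset.mem_range.mpr (by omega))
  have hAinv : ∀ v ∈ W, Φ.A v ∈ W := by
    refine finsup_apply_mem Φ.A ?_
    intro h hh w hw
    have hhd : h ≤ d := Nat.lt_succ_iff.mp (Finset.mem_range.mp hh)
    have hsucc : U Φ (h + 1) ≤ W := by
      by_cases hhd' : h < d
      · exact hUle (h + 1) (by omega)
      · have : Ege Φ (h + 1) = ⊥ := Ege_bot Φ (by omega)
        intro x hx
        rw [U, this] at hx
        have : x = 0 := by simpa using hx.2
        rw [this]; exact Submodule.zero_mem _
    have hkey : Φ.A w - Φ.θ h • w ∈ U Φ (h + 1) := U_A Φ hhd hw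
    have : Φ.A w = (Φ.A w - Φ.θ h • w) + Φ.θ h • w := by abel
    rw [this]
    exact Submodule.add_mem _ (hsucc hkey) (Submodule.smul_mem _ _ (hUle h hhd hw))
  have hAsinv : ∀ v ∈ W, Φ.As v ∈ W := by
    refine finsup_apply_mem Φ.As ?_
    intro h hh w hw
    have hhd : h ≤ d := Nat.lt_succ_iff.mp (Finset.mem_range.mp hh)
    have hkey : Φ.As w - Φ.θs h • w ∈ U Φ (h - 1) := U_As Φ hhd hw
    have : Φ.As w = (Φ.As w - Φ.θs h • w) + Φ.θs h • w := by abel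
    rw [this]
    exact Submodule.add_mem _ (hUle (h - 1) (by omega) hkey)
      (Submodule.smul_mem _ _ (hUle h hhd hw))
  have hWne : W ≠ ⊥ := by
    intro hbot
    have hU0 : LinearMap.range (Φ.Es 0) ≤ U Φ 0 := by
      refine le_inf ?_ ?_
      · exact range_le_rsup (Finset.mem_range.mpr (by omega))
      · rw [Ege_zero]; exact le_top
    have : LinearMap.range (Φ.Es 0) = ⊥ :=
      le_bot_iff.mp (hbot ▸ (hU0.trans (hUle 0 (by omega))))
    exact Φ.hEsne 0 (by omega) (LinearMap.range_eq_bot.mp this)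
  have hWtop : W = ⊤ := (Φ.hirr W hAinv hAsinv).resolve_left hWne
  rw [eq_top_iff, ← hWtop]
  refine Finset.sup_le fun h hh => ?_
  by_cases hhi : h ≤ i
  · exact le_trans (le_trans inf_le_left (Eslt_mono Φ (by omega))) le_sup_left
  · exact le_trans (le_trans inf_le_right (Ege_anti Φ (by omega))) le_sup_right

end TD
namespace TD
variable {F V : Type*} [Field F] [AddCommGroup V] [Module F V] {d : ℕ}
open Module LinearMap Finset
variable (Φ : TDSystem F V d) [FiniteDimensional F V]

/- ============ dimension bookkeeping ============ -/

lemma finrank_Eslt {k : ℕ} (hk : k ≤ d + 1) :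
    Module.finrank F (Eslt Φ k) = ∑ h ∈ Finset.range k, Module.finrank F (LinearMap.range (Φ.Es h)) := by
  rw [Eslt, min_eq_left hk]
  exact finrank_rsup Φ.hEsEs (Finset.range_subset_range.mpr hk)

lemma finrank_Ege (k : ℕ) :
    Module.finrank F (Ege Φ k) = ∑ h ∈ Finset.Icc k d, Module.finrank F (LinearMap.range (Φ.E h)) := by
  exact finrank_rsup Φ.hEE (fun x hx => Finset.mem_range.mpr (by have := Finset.mem_Icc.mp hx; omega))

lemma total_Es : ∑ h ∈ Finset.range (d + 1), Module.finrank F (LinearMap.range (Φ.Es h))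
    = Module.finrank F V := by
  rw [← finrank_rsup Φ.hEsEs (le_refl _), rsup_univ_top Φ.hEssum, finrank_top]

lemma total_E : ∑ h ∈ Finset.range (d + 1), Module.finrank F (LinearMap.range (Φ.E h))
    = Module.finrank F V := by
  rw [← finrank_rsup Φ.hEE (le_refl _), rsup_univ_top Φ.hEsum, finrank_top]

lemma split_sum (g : ℕ → ℕ) {i : ℕ} (hi : i ≤ d) :
    ∑ h ∈ Finset.range (d + 1), g h
      = ∑ h ∈ Finset.range (i + 1), g h + ∑ h ∈ Finset.Icc (i + 1) d, g h := by
  rw [Finset.range_eq_Ico, Finset.range_eq_Ico, ← Finset.Ico_add_one_right_eq_Icc]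
  exact (Finset.sum_Ico_consecutive g (m := 0) (n := i + 1) (k := d + 1) (by omega) (by omega)).symm

lemma sum_ineq {i : ℕ} (hi : i ≤ d) :
    ∑ h ∈ Finset.range (i + 1), Module.finrank F (LinearMap.range (Φ.E h))
      ≤ ∑ h ∈ Finset.range (i + 1), Module.finrank F (LinearMap.range (Φ.Es h)) := by
  have hsup := sup_top Φ i
  have h1 := Submodule.finrank_sup_add_finrank_inf_eq (Eslt Φ (i + 1)) (Ege Φ (i + 1))
  rw [hsup, finrank_top] at h1
  have h2 : Module.finrank F V ≤ Module.finrank F (Eslt Φ (i + 1)) + Module.finrank F (Ege Φ (i + 1)) := by omega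
  rw [finrank_Eslt Φ (by omega), finrank_Ege Φ] at h2
  have h3 : ∑ h ∈ Finset.range (d + 1), Module.finrank F (LinearMap.range (Φ.E h))
      = ∑ h ∈ Finset.range (i + 1), Module.finrank F (LinearMap.range (Φ.E h))
        + ∑ h ∈ Finset.Icc (i + 1) d, Module.finrank F (LinearMap.range (Φ.E h)) :=
    split_sum _ hi
  rw [total_E Φ] at h3
  omega

lemma sums_eq {k : ℕ} (hk : k ≤ d + 1) :
    ∑ h ∈ Finset.range k, Module.finrank F (LinearMap.range (Φ.E h))
      = ∑ h ∈ Finset.range k, Module.finrank F (LinearMap.range (Φ.Es h)) := by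
  rcases Nat.eq_zero_or_pos k with hk0 | hk0
  · simp [hk0]
  · obtain ⟨i, rfl⟩ := Nat.exists_eq_add_of_lt hk0
    simp only [zero_add]
    have h1 := sum_ineq Φ (by omega : i ≤ d)
    have h2 := sum_ineq Φ.swap (by omega : i ≤ d)
    exact le_antisymm h1 h2

lemma disj (i : ℕ) : Eslt Φ (i + 1) ⊓ Ege Φ (i + 1) = ⊥ := by
  by_cases hi : i < d
  · have h1 := Submodule.finrank_sup_add_finrank_inf_eq (Eslt Φ (i + 1)) (Ege Φ (i + 1))
    rw [sup_top Φ i, finrank_top] at h1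
    have h2 : Module.finrank F (Eslt Φ (i + 1)) + Module.finrank F (Ege Φ (i + 1))
        = Module.finrank F V := by
      rw [finrank_Eslt Φ (by omega), finrank_Ege Φ, ← sums_eq Φ (by omega : i + 1 ≤ d + 1)]
      have h3 : ∑ h ∈ Finset.range (d + 1), Module.finrank F (LinearMap.range (Φ.E h))
          = ∑ h ∈ Finset.range (i + 1), Module.finrank F (LinearMap.range (Φ.E h))
            + ∑ h ∈ Finset.Icc (i + 1) d, Module.finrank F (LinearMap.range (Φ.E h)) :=
        split_sum _ (by omega : i ≤ d)
      rw [total_E Φ] at h3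
      omega
    have : Module.finrank F ((Eslt Φ (i + 1)) ⊓ (Ege Φ (i + 1)) : Submodule F V) = 0 := by omega
    exact Submodule.finrank_eq_zero.mp this
  · rw [Ege_bot Φ (by omega), inf_bot_eq]

end TD
namespace TD
variable {F V : Type*} [Field F] [AddCommGroup V] [Module F V] {d : ℕ}
open Module LinearMap Finset
variable (Φ : TDSystem F V d)

lemma split_sum' (g : ℕ → ℕ) {i : ℕ} (hi : i ≤ d + 1) :
    ∑ h ∈ Finset.range (d + 1), g h
      = ∑ h ∈ Finset.range i, g h + ∑ h ∈ Finset.Icc i d, g h := by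
  rw [Finset.range_eq_Ico, Finset.range_eq_Ico, ← Finset.Ico_add_one_right_eq_Icc]
  exact (Finset.sum_Ico_consecutive g (m := 0) (n := i) (k := d + 1) (by omega) (by omega)).symm

variable [FiniteDimensional F V]

lemma disj0 (i : ℕ) : Eslt Φ i ⊓ Ege Φ i = ⊥ := by
  cases i with
  | zero =>
    have : Eslt Φ 0 = ⊥ := by
      rw [Eslt]
      simp [rsup]
    rw [this, bot_inf_eq]
  | succ k => exact disj Φ k

lemma U_Es_inj {i : ℕ} {v : V} (hv : v ∈ U Φ i) (h0 : Φ.Es i v = 0) : v = 0 := by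
  have h1 : v ∈ Eslt Φ i := Eslt_drop Φ hv.1 h0
  have := disj0 Φ i
  have : v ∈ (⊥ : Submodule F V) := this ▸ Submodule.mem_inf.mpr ⟨h1, hv.2⟩
  simpa using this

lemma finrank_U {i : ℕ} (hi : i ≤ d) :
    Module.finrank F (U Φ i) = Module.finrank F (LinearMap.range (Φ.Es i)) := by
  -- upper bound
  set f' : (U Φ i) →ₗ[F] V := (Φ.Es i : V →ₗ[F] V).comp (U Φ i).subtype with hf'
  have hinj : Function.Injective f' := by
    rw [← LinearMap.ker_eq_bot]
    rw [eq_bot_iff]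
    rintro ⟨x, hx⟩ hker
    have : Φ.Es i x = 0 := hker
    have := U_Es_inj Φ hx this
    simpa using this
  have hrange : LinearMap.range f' = Submodule.map (Φ.Es i) (U Φ i) := by
    rw [hf', LinearMap.range_comp, Submodule.range_subtype]
  have hle : LinearMap.range f' ≤ LinearMap.range (Φ.Es i) := by
    rw [hrange]
    rintro _ ⟨w, _, rfl⟩
    exact ⟨w, rfl⟩
  have hub : Module.finrank F (U Φ i) ≤ Module.finrank F (LinearMap.range (Φ.Es i)) := by
    rw [← LinearMap.finrank_range_of_inj hinj]
    exact Submodule.finrank_mono hle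
  -- lower bound
  have h1 := Submodule.finrank_sup_add_finrank_inf_eq (Eslt Φ (i + 1)) (Ege Φ i)
  have h2 : Module.finrank F ((Eslt Φ (i + 1)) ⊔ (Ege Φ i) : Submodule F V)
      ≤ Module.finrank F V := Submodule.finrank_le _
  have h3 : Module.finrank F (Eslt Φ (i + 1))
      = ∑ h ∈ Finset.range i, Module.finrank F (LinearMap.range (Φ.Es h))
        + Module.finrank F (LinearMap.range (Φ.Es i)) := by
    rw [finrank_Eslt Φ (by omega), Finset.sum_range_succ]
  have h4 : Module.finrank F (Ege Φ i)
      = ∑ h ∈ Finset.Icc i d, Module.finrank F (LinearMap.range (Φ.E h)) := finrank_Ege Φ i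
  have h5 : ∑ h ∈ Finset.range (d + 1), Module.finrank F (LinearMap.range (Φ.E h))
      = ∑ h ∈ Finset.range i, Module.finrank F (LinearMap.range (Φ.E h))
        + ∑ h ∈ Finset.Icc i d, Module.finrank F (LinearMap.range (Φ.E h)) :=
    split_sum' _ (by omega)
  have h6 := sums_eq Φ (by omega : i ≤ d + 1)
  have h7 := total_E Φ
  have hU : U Φ i = Eslt Φ (i + 1) ⊓ Ege Φ i := rfl
  rw [← hU] at h1
  omega

lemma map_U {i : ℕ} (hi : i ≤ d) :
    Submodule.map (Φ.Es i) (U Φ i) = LinearMap.range (Φ.Es i) := by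
  have hle : Submodule.map (Φ.Es i) (U Φ i) ≤ LinearMap.range (Φ.Es i) := by
    rintro _ ⟨w, _, rfl⟩; exact ⟨w, rfl⟩
  refine Submodule.eq_of_le_of_finrank_le hle ?_
  set f' : (U Φ i) →ₗ[F] V := (Φ.Es i : V →ₗ[F] V).comp (U Φ i).subtype with hf'
  have hinj : Function.Injective f' := by
    rw [← LinearMap.ker_eq_bot, eq_bot_iff]
    rintro ⟨x, hx⟩ hker
    have : Φ.Es i x = 0 := hker
    have := U_Es_inj Φ hx this
    simpa using this
  have hrange : LinearMap.range f' = Submodule.map (Φ.Es i) (U Φ i) := by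
    rw [hf', LinearMap.range_comp, Submodule.range_subtype]
  rw [← hrange, LinearMap.finrank_range_of_inj hinj, finrank_U Φ hi]

end TD
namespace TD
variable {F V : Type*} [Field F] [AddCommGroup V] [Module F V] {d : ℕ}
open Module LinearMap Finset
variable (Φ : TDSystem F V d)

/- ============ the raising product ============ -/

/-- `(A - θ_{i+m-1}) ⋯ (A - θ_{i+1})(A - θ_i)`. -/
noncomputable def qprod (i : ℕ) : ℕ → Module.End F V
  | 0 => 1
  | (m + 1) => (Φ.A - Φ.θ (i + m) • (1 : Module.End F V)) * qprod i m

lemma sub_smul_one_apply (c : F) (g : Module.End F V) (v : V) :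
    (g - c • (1 : Module.End F V)) v = g v - c • v := by
  simp

lemma qprod_U {i : ℕ} : ∀ m, i + m ≤ d → ∀ v ∈ U Φ i, (qprod Φ i m) v ∈ U Φ (i + m) := by
  intro m
  induction m with
  | zero => intro _ v hv; simpa [qprod] using hv
  | succ n ih =>
    intro hnd v hv
    have h1 : (qprod Φ i n) v ∈ U Φ (i + n) := ih (by omega) v hv
    have h2 := U_A Φ (by omega : i + n ≤ d) h1
    have h3 : (qprod Φ i (n + 1)) v
        = Φ.A ((qprod Φ i n) v) - Φ.θ (i + n) • ((qprod Φ i n) v) := by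
      rw [qprod]
      rw [Module.End.mul_apply, sub_smul_one_apply]
    rw [h3, show i + (n + 1) = (i + n) + 1 by omega]
    exact h2

lemma qprod_Eslt {i : ℕ} : ∀ m k, ∀ v ∈ Eslt Φ k, (qprod Φ i m) v ∈ Eslt Φ (k + m) := by
  intro m
  induction m with
  | zero => intro k v hv; simpa [qprod] using hv
  | succ n ih =>
    intro k v hv
    have h1 : (qprod Φ i n) v ∈ Eslt Φ (k + n) := ih k v hv
    have h3 : (qprod Φ i (n + 1)) v
        = Φ.A ((qprod Φ i n) v) - Φ.θ (i + n) • ((qprod Φ i n) v) := by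
      rw [qprod, Module.End.mul_apply, sub_smul_one_apply]
    rw [h3, show k + (n + 1) = (k + n) + 1 by omega]
    exact Submodule.sub_mem _ (A_Eslt Φ h1)
      (Submodule.smul_mem _ _ (Eslt_mono Φ (by omega) h1))

lemma pow_sub_qprod_Eslt {i : ℕ} :
    ∀ m, 1 ≤ m → ∀ k, ∀ v ∈ Eslt Φ k, (Φ.A ^ m - qprod Φ i m) v ∈ Eslt Φ (k + m - 1) := by
  intro m
  induction m with
  | zero => omega
  | succ n ih =>
    intro _ k v hv
    rcases Nat.eq_zero_or_pos n with hn | hn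
    · subst hn
      have : (Φ.A ^ 1 - qprod Φ i 1) v = Φ.θ (i + 0) • v := by
        rw [qprod, qprod, mul_one, pow_one, LinearMap.sub_apply, sub_smul_one_apply]
        abel
      rw [this]
      simpa using Submodule.smul_mem _ _ hv
    · have expand : (Φ.A ^ (n + 1) - qprod Φ i (n + 1)) v
          = Φ.A ((Φ.A ^ n - qprod Φ i n) v) + Φ.θ (i + n) • ((qprod Φ i n) v) := by
        rw [qprod, pow_succ']
        simp only [LinearMap.sub_apply, Module.End.mul_apply, sub_smul_one_apply, map_sub]
        abel
      rw [expand]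
      have m1 : Φ.A ((Φ.A ^ n - qprod Φ i n) v) ∈ Eslt Φ (k + n - 1 + 1) :=
        A_Eslt Φ (ih hn k v hv)
      have m2 : Φ.θ (i + n) • ((qprod Φ i n) v) ∈ Eslt Φ (k + n) :=
        Submodule.smul_mem _ _ (qprod_Eslt Φ n k v hv)
      have : Eslt Φ (k + n - 1 + 1) ≤ Eslt Φ (k + (n + 1) - 1) := Eslt_mono Φ (by omega)
      have m1' := this m1
      have : Eslt Φ (k + n) ≤ Eslt Φ (k + (n + 1) - 1) := Eslt_mono Φ (by omega)
      exact Submodule.add_mem _ m1' (this m2)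

lemma E_qprod {k i : ℕ} (hk : k ≤ d) (m : ℕ) :
    Φ.E k * qprod Φ i m = (∏ h ∈ Finset.range m, (Φ.θ k - Φ.θ (i + h))) • Φ.E k := by
  induction m with
  | zero => simp [qprod]
  | succ n ih =>
    have h1 : Φ.E k * qprod Φ i (n + 1)
        = (Φ.E k * (Φ.A - Φ.θ (i + n) • (1 : Module.End F V))) * qprod Φ i n := by
      rw [qprod, mul_assoc]
    have h2 : Φ.E k * (Φ.A - Φ.θ (i + n) • (1 : Module.End F V))
        = (Φ.θ k - Φ.θ (i + n)) • Φ.E k := by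
      rw [mul_sub, diag_left Φ.hEE Φ.hA hk, mul_smul_comm, mul_one, sub_smul]
    rw [h1, h2, smul_mul_assoc, ih, smul_smul, Finset.prod_range_succ, mul_comm]

end TD
namespace TD
variable {F V : Type*} [Field F] [AddCommGroup V] [Module F V] {d : ℕ}
open Module LinearMap Finset
variable (Φ : TDSystem F V d) [FiniteDimensional F V]

lemma Eslt_revE (k : ℕ) : Eslt Φ.revE k = Eslt Φ k := rfl

/-- The key injectivity theorem: for `i ≤ j`, `i + j ≤ d`, the map
`v ↦ E*_j A^{j-i} v` is injective on `U_i`. -/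
lemma inj_core {i j : ℕ} (hij : i ≤ j) (hjd : j ≤ d) (hsum : i + j ≤ d)
    {v : V} (hv : v ∈ U Φ i) (h0 : Φ.Es j ((Φ.A ^ (j - i)) v) = 0) : v = 0 := by
  set m := j - i with hm
  have him : i + m = j := by omega
  -- Step 1 : Es j kills qprod v
  have step1 : Φ.Es j ((qprod Φ i m) v) = 0 := by
    rcases Nat.eq_zero_or_pos m with hm0 | hm0
    · rw [hm0]
      rw [hm0] at h0
      simpa [qprod] using h0
    · have hdiff : (Φ.A ^ m - qprod Φ i m) v ∈ Eslt Φ (i + 1 + m - 1) :=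
        pow_sub_qprod_Eslt Φ m hm0 (i + 1) v hv.1
      have : i + 1 + m - 1 = j := by omega
      rw [this] at hdiff
      have hkill : Φ.Es j ((Φ.A ^ m - qprod Φ i m) v) = 0 :=
        Es_kill_Eslt Φ (le_refl j) hjd hdiff
      rw [LinearMap.sub_apply, map_sub, h0] at hkill
      have := hkill
      rw [zero_sub, neg_eq_zero] at this
      exact this
  -- Step 2,3 : qprod v = 0
  have step2 : (qprod Φ i m) v ∈ U Φ j := him ▸ qprod_U Φ m (by omega) v hv
  have step3 : (qprod Φ i m) v = 0 := U_Es_inj Φ step2 step1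
  -- Step 4 : E_k v = 0 for j ≤ k ≤ d
  have step4 : ∀ k, j ≤ k → k ≤ d → Φ.E k v = 0 := by
    intro k hjk hkd
    have h1 : Φ.E k ((qprod Φ i m) v) = (∏ h ∈ Finset.range m, (Φ.θ k - Φ.θ (i + h))) • Φ.E k v := by
      have := congrArg (fun (g : Module.End F V) => g v) (E_qprod Φ (i := i) hkd m)
      simpa using this
    rw [step3, map_zero] at h1
    have hc : (∏ h ∈ Finset.range m, (Φ.θ k - Φ.θ (i + h))) ≠ 0 := by
      rw [Finset.prod_ne_zero_iff]
      intro h hh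
      have hhm : h < m := Finset.mem_range.mp hh
      have : Φ.θ k ≠ Φ.θ (i + h) := Φ.hθ k hkd (i + h) (by omega) (by omega)
      exact sub_ne_zero_of_ne this
    have := h1.symm
    rcases smul_eq_zero.mp this with h | h
    · exact absurd h hc
    · exact h
  -- Step 5 : v lies in the span of E_h V for h < j
  have step5 : v ∈ rsup Φ.E (Finset.range j) := by
    have hd : v = ∑ h ∈ Finset.range (d + 1), Φ.E h v := (sum_apply_eq Φ.hEsum v).symm
    rw [hd]
    refine Submodule.sum_mem _ fun h hh => ?_
    have hhd : h ≤ d := Nat.lt_succ_iff.mp (Finset.mem_range.mp hh)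
    by_cases hhj : h < j
    · exact mem_rsup_of (Finset.mem_range.mpr hhj) v
    · rw [step4 h (by omega) hhd]
      exact Submodule.zero_mem _
  -- Step 6 : this span is inside Ege of the E-reversed system
  have step6 : rsup Φ.E (Finset.range j) ≤ Ege Φ.revE (i + 1) := by
    rw [rsup_le_iff]
    intro h hh
    have hhj : h < j := Finset.mem_range.mp hh
    have hhd : h ≤ d := by omega
    have he : Φ.E h = Φ.revE.E (d - h) := by
      show Φ.E h = Φ.E (d - (d - h))
      rw [Nat.sub_sub_self hhd]
    rw [he]
    exact range_le_rsup (Finset.mem_Icc.mpr ⟨by omega, by omega⟩)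
  -- Step 7,8 : conclude
  have hfin : v ∈ Eslt Φ.revE (i + 1) ⊓ Ege Φ.revE (i + 1) := by
    constructor
    · rw [Eslt_revE]; exact hv.1
    · exact step6 step5
  rw [disj Φ.revE i] at hfin
  simpa using hfin

/-- Key rank theorem: for `i ≤ j ≤ d` with `i + j ≤ d`,
`rank (E*_j A^{j-i} E*_i) = dim (E*_i V)`. -/
lemma rank_core {i j : ℕ} (hij : i ≤ j) (hjd : j ≤ d) (hsum : i + j ≤ d) :
    Module.finrank F (LinearMap.range (Φ.Es j * Φ.A ^ (j - i) * Φ.Es i))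
      = Module.finrank F (LinearMap.range (Φ.Es i)) := by
  set m := j - i with hm
  -- the key exchange identity
  have key : ∀ u ∈ Eslt Φ (i + 1), Φ.Es j ((Φ.A ^ m) (Φ.Es i u)) = Φ.Es j ((Φ.A ^ m) u) := by
    intro u hu
    have hdec : u = ∑ h ∈ Finset.range (i + 1), Φ.Es h u := by
      have := mem_Eslt_decomp Φ hu
      rwa [min_eq_left (by omega)] at this
    have hsub : u - Φ.Es i u ∈ Eslt Φ i := by
      have : u - Φ.Es i u = ∑ h ∈ Finset.range i, Φ.Es h u := by
        rw [sub_eq_iff_eq_add]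
        rw [Finset.sum_range_succ] at hdec
        exact hdec
      rw [this]
      exact Submodule.sum_mem _ fun h hh =>
        mem_rsup_of (Finset.mem_range.mpr (by have := Finset.mem_range.mp hh; omega)) u
    have hmove : (Φ.A ^ m) (u - Φ.Es i u) ∈ Eslt Φ (i + m) := Apow_Eslt Φ hsub
    have hkill : Φ.Es j ((Φ.A ^ m) (u - Φ.Es i u)) = 0 :=
      Es_kill_Eslt Φ (by omega) hjd hmove
    rw [map_sub, map_sub] at hkill
    have := sub_eq_zero.mp hkill
    exact this.symm
  set g : Module.End F V := Φ.Es j * Φ.A ^ m with hg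
  set f' : (U Φ i) →ₗ[F] V := (g : V →ₗ[F] V).comp (U Φ i).subtype with hf'
  have hinj : Function.Injective f' := by
    rw [← LinearMap.ker_eq_bot, eq_bot_iff]
    rintro ⟨x, hx⟩ hker
    have h0 : Φ.Es j ((Φ.A ^ m) x) = 0 := hker
    have := inj_core Φ hij hjd hsum hx h0
    simpa using this
  have hrank : Module.finrank F (LinearMap.range f') = Module.finrank F (LinearMap.range (Φ.Es i)) := by
    rw [LinearMap.finrank_range_of_inj hinj, finrank_U Φ (by omega)]
  have hre : LinearMap.range (Φ.Es j * Φ.A ^ m * Φ.Es i) = LinearMap.range f' := by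
    apply le_antisymm
    · rintro _ ⟨w, rfl⟩
      have hEw : Φ.Es i w ∈ LinearMap.range (Φ.Es i) := ⟨w, rfl⟩
      rw [← map_U Φ (by omega : i ≤ d)] at hEw
      obtain ⟨u, hu, huw⟩ := hEw
      refine ⟨⟨u, hu⟩, ?_⟩
      have e1 : f' ⟨u, hu⟩ = Φ.Es j ((Φ.A ^ m) u) := rfl
      have e2 : (Φ.Es j * Φ.A ^ m * Φ.Es i) w = Φ.Es j ((Φ.A ^ m) (Φ.Es i w)) := rfl
      rw [e1, e2, ← huw, key u hu.1]
    · rintro _ ⟨⟨u, hu⟩, rfl⟩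
      refine ⟨u, ?_⟩
      have e1 : f' ⟨u, hu⟩ = Φ.Es j ((Φ.A ^ m) u) := rfl
      have e2 : (Φ.Es j * Φ.A ^ m * Φ.Es i) u = Φ.Es j ((Φ.A ^ m) (Φ.Es i u)) := rfl
      rw [e1, e2, key u hu.1]
  rw [hre, hrank]

end TD
namespace TD
variable {F V : Type*} [Field F] [AddCommGroup V] [Module F V] {d : ℕ}
open Module LinearMap Finset

lemma dm_mul (f g : Module.End F V) :
    (f * g).dualMap = g.dualMap * f.dualMap := rfl

lemma dm_one : (1 : Module.End F V).dualMap = 1 := rfl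

lemma dm_zero : (0 : Module.End F V).dualMap = 0 := by
  ext φ v; simp

lemma dm_add (f g : Module.End F V) : (f + g).dualMap = f.dualMap + g.dualMap := by
  ext φ v; simp

lemma dm_smul (c : F) (f : Module.End F V) : (c • f).dualMap = c • f.dualMap := by
  ext φ v; simp

lemma dm_sum {s : Finset ℕ} (f : ℕ → Module.End F V) :
    (∑ i ∈ s, f i).dualMap = ∑ i ∈ s, (f i).dualMap := by
  classical
  induction s using Finset.induction_on with
  | empty => simpa using dm_zero
  | @insert a s hans ih =>
    rw [Finset.sum_insert hans, Finset.sum_insert hans, dm_add, ih]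

lemma dm_pow (f : Module.End F V) (m : ℕ) : (f ^ m).dualMap = (f.dualMap) ^ m := by
  induction m with
  | zero => simpa using dm_one
  | succ n ih => rw [pow_succ, dm_mul, ih, pow_succ']

lemma dm_ne_zero [FiniteDimensional F V] {f : Module.End F V} (hf : f ≠ 0) :
    f.dualMap ≠ 0 := by
  intro h0
  apply hf
  have h1 : Module.finrank F (LinearMap.range f.dualMap) = 0 := by
    rw [h0]
    simp
  rw [LinearMap.finrank_range_dualMap_eq_finrank_range] at h1
  rw [← LinearMap.range_eq_bot]
  exact Submodule.finrank_eq_zero.mp h1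

/-- The dual (transpose) tridiagonal system on the dual space. -/
noncomputable def _root_.TDSystem.dual [FiniteDimensional F V] (Φ : TDSystem F V d) :
    TDSystem F (Module.Dual F V) d where
  A := Φ.A.dualMap
  As := Φ.As.dualMap
  E := fun i => (Φ.E i).dualMap
  Es := fun i => (Φ.Es i).dualMap
  θ := Φ.θ
  θs := Φ.θs
  hEE := by
    intro i hi j hj
    rw [← dm_mul]
    by_cases hij : i = j
    · subst hij
      rw [Φ.hEE i hi i hi, if_pos rfl, if_pos rfl]
    · rw [Φ.hEE j hj i hi, if_neg (fun e => hij e.symm), if_neg hij, dm_zero]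
  hEsEs := by
    intro i hi j hj
    rw [← dm_mul]
    by_cases hij : i = j
    · subst hij
      rw [Φ.hEsEs i hi i hi, if_pos rfl, if_pos rfl]
    · rw [Φ.hEsEs j hj i hi, if_neg (fun e => hij e.symm), if_neg hij, dm_zero]
  hEsum := by rw [← dm_sum, Φ.hEsum, dm_one]
  hEssum := by rw [← dm_sum, Φ.hEssum, dm_one]
  hEne := fun i hi => dm_ne_zero (Φ.hEne i hi)
  hEsne := fun i hi => dm_ne_zero (Φ.hEsne i hi)
  hA := by
    rw [Φ.hA, dm_sum]
    exact Finset.sum_congr rfl fun i _ => dm_smul _ _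
  hAs := by
    rw [Φ.hAs, dm_sum]
    exact Finset.sum_congr rfl fun i _ => dm_smul _ _
  hθ := Φ.hθ
  hθs := Φ.hθs
  htri := by
    intro i hi j hj hc
    have h0 : Φ.Es j * Φ.A * Φ.Es i = 0 := Φ.htri j hj i hi hc.symm
    calc (Φ.Es i).dualMap * Φ.A.dualMap * (Φ.Es j).dualMap
        = (Φ.Es j * Φ.A * Φ.Es i).dualMap := by rw [dm_mul, dm_mul, mul_assoc]
      _ = 0 := by rw [h0, dm_zero]
  htris := by
    intro i hi j hj hc
    have h0 : Φ.E j * Φ.As * Φ.E i = 0 := Φ.htris j hj i hi hc.symm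
    calc (Φ.E i).dualMap * Φ.As.dualMap * (Φ.E j).dualMap
        = (Φ.E j * Φ.As * Φ.E i).dualMap := by rw [dm_mul, dm_mul, mul_assoc]
      _ = 0 := by rw [h0, dm_zero]
  hirr := by
    intro W h1 h2
    set W0 := W.dualCoannihilator with hW0
    have hAinv : ∀ v ∈ W0, Φ.A v ∈ W0 := by
      intro v hv
      rw [Submodule.mem_dualCoannihilator] at hv ⊢
      intro φ hφ
      have : Φ.A.dualMap φ ∈ W := h1 φ hφ
      exact hv _ this
    have hAsinv : ∀ v ∈ W0, Φ.As v ∈ W0 := by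
      intro v hv
      rw [Submodule.mem_dualCoannihilator] at hv ⊢
      intro φ hφ
      have : Φ.As.dualMap φ ∈ W := h2 φ hφ
      exact hv _ this
    rcases Φ.hirr W0 hAinv hAsinv with hbot | htop
    · right
      have hfr := Subspace.finrank_add_finrank_dualCoannihilator_eq W
      rw [← hW0, hbot] at hfr
      rw [finrank_bot F V] at hfr
      rw [add_zero] at hfr
      apply Submodule.eq_top_of_finrank_eq
      rw [hfr, Subspace.dual_finrank_eq]
    · left
      rw [eq_bot_iff]
      intro φ hφ
      have : ∀ v : V, φ v = 0 := by
        intro v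
        have hv : v ∈ W0 := htop ▸ Submodule.mem_top
        rw [Submodule.mem_dualCoannihilator] at hv
        exact hv φ hφ
      have : φ = 0 := by ext v; exact this v
      simp [this]

/-- rank lemma via the dual system. -/
lemma rank_core_dual [FiniteDimensional F V] (Φ : TDSystem F V d) {i j : ℕ}
    (hij : i ≤ j) (hjd : j ≤ d) (hsum : i + j ≤ d) :
    Module.finrank F (LinearMap.range (Φ.Es i * Φ.A ^ (j - i) * Φ.Es j))
      = Module.finrank F (LinearMap.range (Φ.Es i)) := by
  have h := rank_core Φ.dual hij hjd hsum
  have e1 : Φ.dual.Es j * Φ.dual.A ^ (j - i) * Φ.dual.Es i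
      = (Φ.Es i * Φ.A ^ (j - i) * Φ.Es j).dualMap := by
    show (Φ.Es j).dualMap * (Φ.A.dualMap) ^ (j - i) * (Φ.Es i).dualMap = _
    rw [← dm_pow, dm_mul, dm_mul]
    rw [mul_assoc]
  rw [e1, LinearMap.finrank_range_dualMap_eq_finrank_range] at h
  have e2 : Φ.dual.Es i = (Φ.Es i).dualMap := rfl
  rw [e2, LinearMap.finrank_range_dualMap_eq_finrank_range] at h
  exact h

end TD
namespace TD
variable {F V : Type*} [Field F] [AddCommGroup V] [Module F V] {d : ℕ}
open Module LinearMap Finset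
variable (Φ : TDSystem F V d) [FiniteDimensional F V]

lemma rank_ge1 {i j : ℕ} (hij : i ≤ j) (hjd : j ≤ d) (hsum : d ≤ i + j) :
    Module.finrank F (LinearMap.range (Φ.Es i * Φ.A ^ (j - i) * Φ.Es j))
      = Module.finrank F (LinearMap.range (Φ.Es j)) := by
  have h := rank_core Φ.revEs (show d - j ≤ d - i by omega) (show d - i ≤ d by omega)
    (show (d - j) + (d - i) ≤ d by omega)
  have e1 : Φ.revEs.Es (d - i) = Φ.Es i := by
    show Φ.Es (d - (d - i)) = Φ.Es i
    rw [Nat.sub_sub_self (le_trans hij hjd)]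
  have e2 : Φ.revEs.Es (d - j) = Φ.Es j := by
    show Φ.Es (d - (d - j)) = Φ.Es j
    rw [Nat.sub_sub_self hjd]
  have e3 : (d - i) - (d - j) = j - i := by omega
  have e4 : Φ.revEs.A = Φ.A := rfl
  rw [e1, e2, e3, e4] at h
  exact h

lemma rank_ge2 {i j : ℕ} (hij : i ≤ j) (hjd : j ≤ d) (hsum : d ≤ i + j) :
    Module.finrank F (LinearMap.range (Φ.Es j * Φ.A ^ (j - i) * Φ.Es i))
      = Module.finrank F (LinearMap.range (Φ.Es j)) := by
  have h := rank_core_dual Φ.revEs (show d - j ≤ d - i by omega) (show d - i ≤ d by omega)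
    (show (d - j) + (d - i) ≤ d by omega)
  have e1 : Φ.revEs.Es (d - i) = Φ.Es i := by
    show Φ.Es (d - (d - i)) = Φ.Es i
    rw [Nat.sub_sub_self (le_trans hij hjd)]
  have e2 : Φ.revEs.Es (d - j) = Φ.Es j := by
    show Φ.Es (d - (d - j)) = Φ.Es j
    rw [Nat.sub_sub_self hjd]
  have e3 : (d - i) - (d - j) = j - i := by omega
  have e4 : Φ.revEs.A = Φ.A := rfl
  rw [e1, e2, e3, e4] at h
  exact h

lemma rank_le_last (f g : Module.End F V) :
    Module.finrank F (LinearMap.range (f * g)) ≤ Module.finrank F (LinearMap.range g) := by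
  have : LinearMap.range (f * g) = Submodule.map f (LinearMap.range g) := by
    rw [show f * g = (f : V →ₗ[F] V).comp g from rfl, LinearMap.range_comp]
  rw [this]
  exact Submodule.finrank_map_le f (LinearMap.range g)

end TD

/-- For `0 ≤ i ≤ j ≤ d`,
`rank(E*_i A^{j-i} E*_j) = rank(E*_j A^{j-i} E*_i) = min(ρ_i, ρ_j)` where
`ρ_k = dim E*_kV`; this minimum is `ρ_i` if `i+j ≤ d` and `ρ_j` if `i+j ≥ d`. -/
theorem stmt13 {F V : Type*} [Field F] [AddCommGroup V] [Module F V]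
    [FiniteDimensional F V] [Nontrivial V] (d : ℕ) (hd : 1 ≤ d)
    (Φ : TDSystem F V d) (ρ : ℕ → ℕ)
    (hρ : ∀ k ≤ d, ρ k = Module.finrank F (LinearMap.range (Φ.Es k))) :
    ∀ i j, i ≤ j → j ≤ d →
      Module.finrank F (LinearMap.range (Φ.Es i * Φ.A ^ (j - i) * Φ.Es j))
          = min (ρ i) (ρ j) ∧
      Module.finrank F (LinearMap.range (Φ.Es j * Φ.A ^ (j - i) * Φ.Es i))
          = min (ρ i) (ρ j) ∧
      (i + j ≤ d → min (ρ i) (ρ j) = ρ i) ∧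
      (d ≤ i + j → min (ρ i) (ρ j) = ρ j) := by
  intro i j hij hjd
  have hρi : ρ i = Module.finrank F (LinearMap.range (Φ.Es i)) := hρ i (by omega)
  have hρj : ρ j = Module.finrank F (LinearMap.range (Φ.Es j)) := hρ j hjd
  by_cases hc : i + j ≤ d
  · -- i + j ≤ d : both ranks equal ρ i, and ρ i ≤ ρ j
    have r1 : Module.finrank F (LinearMap.range (Φ.Es i * Φ.A ^ (j - i) * Φ.Es j))
        = Module.finrank F (LinearMap.range (Φ.Es i)) := TD.rank_core_dual Φ hij hjd hc
    have r2' : Module.finrank F (LinearMap.range (Φ.Es j * Φ.A ^ (j - i) * Φ.Es i))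
        = Module.finrank F (LinearMap.range (Φ.Es i)) := TD.rank_core Φ hij hjd hc
    have hle : ρ i ≤ ρ j := by
      rw [hρi, hρj, ← r1]
      have := TD.rank_le_last (Φ.Es i * Φ.A ^ (j - i)) (Φ.Es j)
      rw [mul_assoc] at this
      exact this
    have hmin : min (ρ i) (ρ j) = ρ i := min_eq_left hle
    refine ⟨by rw [hmin, hρi]; exact r1, by rw [hmin, hρi]; exact r2', fun _ => hmin, ?_⟩
    intro hdij
    have hij' : i + j = d := by omega
    have q2 : Module.finrank F (LinearMap.range (Φ.Es j * Φ.A ^ (j - i) * Φ.Es i))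
        = Module.finrank F (LinearMap.range (Φ.Es j)) := TD.rank_ge2 Φ hij hjd (by omega)
    rw [hmin, hρi, hρj, ← r2', q2]
  · -- d < i + j : both ranks equal ρ j, and ρ j ≤ ρ i
    have hc' : d ≤ i + j := by omega
    have r1 : Module.finrank F (LinearMap.range (Φ.Es i * Φ.A ^ (j - i) * Φ.Es j))
        = Module.finrank F (LinearMap.range (Φ.Es j)) := TD.rank_ge1 Φ hij hjd hc'
    have r2 : Module.finrank F (LinearMap.range (Φ.Es j * Φ.A ^ (j - i) * Φ.Es i))
        = Module.finrank F (LinearMap.range (Φ.Es j)) := TD.rank_ge2 Φ hij hjd hc'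
    have hle : ρ j ≤ ρ i := by
      rw [hρi, hρj, ← r2]
      have := TD.rank_le_last (Φ.Es j * Φ.A ^ (j - i)) (Φ.Es i)
      rw [mul_assoc] at this
      exact this
    have hmin : min (ρ i) (ρ j) = ρ j := min_eq_right hle
    exact ⟨by rw [hmin, hρj]; exact r1, by rw [hmin, hρj]; exact r2,
      fun h => absurd h hc, fun _ => hmin⟩
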